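/- If K is a non-Archimedean valued field satisfying |∑_{j=1}^n λ_j²| = max_{1≤j≤n} |λ_j|² for all λ_1,…,λ_n ∈ K and all n, then for any λ_1,…,λ_d ∈ K one has |∑_{k=1}^d λ_k|² ≤ |d| · |∑_{k=1}^d λ_k²|. -/
import Mathlib
set_option maxHeartbeats 1000000

theorem key_aux (K : Type*) [Field K] (v : AbsoluteValue K ℝ)
    (hsq : ∀ (n : ℕ) (lam : Fin (n + 1) → K),
      v (∑ j, (lam j) ^ 2) =
        Finset.univ.sup' Finset.univ_nonempty (fun j => (v (lam j)) ^ 2))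
    {ι : Type} (s : Finset ι) (g : ι → K) {i₀ : ι} (hi : i₀ ∈ s) :
    v (g i₀) ^ 2 ≤ v (∑ i ∈ s, g i ^ 2) := by
  have hpos : 0 < s.card := Finset.card_pos.2 ⟨i₀, hi⟩
  obtain ⟨n, hn⟩ : ∃ n, s.card = n + 1 := ⟨s.card - 1, (Nat.succ_pred_eq_of_pos hpos).symm⟩
  let e : {x // x ∈ s} ≃ Fin (n + 1) := s.equivFin.trans (finCongr hn)
  set lam : Fin (n + 1) → K := fun j => g (e.symm j : ι) with hlam
  have hsum : ∑ j, lam j ^ 2 = ∑ i ∈ s, g i ^ 2 := by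
    rw [← Finset.sum_coe_sort s (fun i => g i ^ 2)]
    exact Equiv.sum_comp e.symm (fun x => g (x : ι) ^ 2)
  calc v (g i₀) ^ 2 = v (lam (e ⟨i₀, hi⟩)) ^ 2 := by simp [hlam]
    _ ≤ Finset.univ.sup' Finset.univ_nonempty (fun j => (v (lam j)) ^ 2) :=
        Finset.le_sup' (fun j => (v (lam j)) ^ 2) (Finset.mem_univ _)
    _ = v (∑ j, lam j ^ 2) := (hsq n lam).symm
    _ = v (∑ i ∈ s, g i ^ 2) := by rw [hsum]

theorem stmt_0 (K : Type*) [Field K] (v : AbsoluteValue K ℝ)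
    (hna : IsNonarchimedean v)
    (hsq : ∀ (n : ℕ) (lam : Fin (n + 1) → K),
      v (∑ j, (lam j) ^ 2) =
        Finset.univ.sup' Finset.univ_nonempty (fun j => (v (lam j)) ^ 2))
    (d : ℕ) (lam : Fin d → K) :
    (v (∑ k, lam k)) ^ 2 ≤ v (d : K) * v (∑ k, (lam k) ^ 2) := by
  set S := ∑ k, lam k with hS
  set T := ∑ k, (lam k) ^ 2 with hT
  set g : Option (Option (Fin d × Fin d)) → K :=
    fun i => i.elim S (fun j => j.elim S (fun p => lam p.1 - lam p.2)) with hg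
  have hpairs : ∑ p : Fin d × Fin d, (lam p.1 - lam p.2) ^ 2
      = 2 * (d : K) * T - 2 * S ^ 2 := by
    rw [Fintype.sum_prod_type]
    have h1 : ∀ j : Fin d, ∑ k, (lam j - lam k) ^ 2
        = (d : K) * lam j ^ 2 - 2 * lam j * S + T := by
      intro j
      have : ∀ k : Fin d, (lam j - lam k) ^ 2 = lam j ^ 2 - 2 * lam j * lam k + lam k ^ 2 := by
        intro k; ring
      rw [Finset.sum_congr rfl fun k _ => this k]
      simp [Finset.sum_add_distrib, Finset.sum_sub_distrib, ← Finset.mul_sum,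
        Finset.sum_const, Finset.card_univ, nsmul_eq_mul, hS, hT]
    rw [Finset.sum_congr rfl fun j _ => h1 j]
    simp [Finset.sum_add_distrib, Finset.sum_sub_distrib, ← Finset.mul_sum, ← Finset.sum_mul,
      Finset.sum_const, Finset.card_univ, nsmul_eq_mul, hS, hT]
    ring
  have htot : ∑ i : Option (Option (Fin d × Fin d)), g i ^ 2 = 2 * (d : K) * T := by
    rw [Fintype.sum_option, Fintype.sum_option]
    simp only [hg, Option.elim]
    rw [hpairs]; ring
  have hk := key_aux K v hsq Finset.univ g (i₀ := none) (Finset.mem_univ _)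
  rw [htot] at hk
  have h2 : v (2 : K) ≤ 1 := by
    calc v (2 : K) = v (1 + 1) := by norm_num
      _ ≤ max (v 1) (v 1) := hna 1 1
      _ = 1 := by simp
  calc (v S) ^ 2 ≤ v (2 * (d : K) * T) := hk
    _ = v 2 * (v (d : K) * v T) := by rw [v.map_mul, v.map_mul, mul_assoc]
    _ ≤ 1 * (v (d : K) * v T) := by
        apply mul_le_mul_of_nonneg_right h2 (mul_nonneg (v.nonneg _) (v.nonneg _))
    _ = v (d : K) * v T := one_mul _
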